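/- Define, for u = u₁⋯u_i ∈ K_i and v = v₁⋯v_j ∈ K_j, the word u ∨ v := u₁⋯u_i v₁⋯v_{j−1}(v_j+1) of length i+j. Then u ∨ v ∈ K_{i+j}; moreover, for every i ≥ 2 and every w ∈ K_i there exists a unique triple (j, u, v) with 1 ≤ j < i, u ∈ K_j, v ∈ K_{i−j} and w = u ∨ v. -/

import Mathlib

/-- A list `w = w₁⋯w_i` of natural numbers is a K-word (an element of `K_i` with
`i = w.length`) if `i ≥ 1`, `w₁+⋯+w_j ≤ j−1` for all `1 ≤ j < i`, and
`w₁+⋯+w_i = i−1`. -/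
def IsKList (l : List ℕ) : Prop :=
  1 ≤ l.length ∧
  (∀ j : ℕ, 1 ≤ j → j < l.length → (l.take j).sum ≤ j - 1) ∧
  l.sum = l.length - 1

/-- Add `1` to the last letter of a list (so `u ++ bumpLast v` is the word
`u ∨ v = u₁⋯u_i v₁⋯v_{j−1}(v_j+1)`). -/
def bumpLast : List ℕ → List ℕ
  | [] => []
  | [x] => [x + 1]
  | x :: y :: l => x :: bumpLast (y :: l)

lemma bumpLast_append (l : List ℕ) (x : ℕ) : bumpLast (l ++ [x]) = l ++ [x + 1] := by
  induction l with
  | nil => rfl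
  | cons a t ih =>
    cases t with
    | nil => rfl
    | cons b t' =>
      show a :: bumpLast ((b :: t') ++ [x]) = _
      rw [ih]
      rfl

lemma exists_eq_append_getLast {l : List ℕ} (h : l ≠ []) :
    ∃ t a, l = t ++ [a] := ⟨l.dropLast, l.getLast h, (List.dropLast_append_getLast h).symm⟩

lemma bumpLast_length (l : List ℕ) : (bumpLast l).length = l.length := by
  rcases eq_or_ne l [] with rfl | h
  · rfl
  · obtain ⟨t, a, rfl⟩ := exists_eq_append_getLast h
    simp [bumpLast_append]

lemma bumpLast_sum {l : List ℕ} (h : l ≠ []) : (bumpLast l).sum = l.sum + 1 := by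
  obtain ⟨t, a, rfl⟩ := exists_eq_append_getLast h
  simp [bumpLast_append]
  ring

lemma bumpLast_take {l : List ℕ} {m : ℕ} (h : m < l.length) :
    (bumpLast l).take m = l.take m := by
  have hne : l ≠ [] := by rintro rfl; simp at h
  obtain ⟨t, a, rfl⟩ := exists_eq_append_getLast hne
  simp only [List.length_append, List.length_singleton] at h
  rw [bumpLast_append, List.take_append_of_le_length (by omega),
    List.take_append_of_le_length (by omega)]

lemma bumpLast_inj {u v : List ℕ} (h : bumpLast u = bumpLast v) : u = v := by
  have hlen : u.length = v.length := by rw [← bumpLast_length, h, bumpLast_length]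
  rcases eq_or_ne u [] with rfl | hu
  · exact (List.length_eq_zero_iff.mp hlen.symm).symm
  · have hv : v ≠ [] := by
      intro hv; rw [hv] at hlen; exact hu (List.length_eq_zero_iff.mp hlen)
    obtain ⟨t₁, a₁, rfl⟩ := exists_eq_append_getLast hu
    obtain ⟨t₂, a₂, rfl⟩ := exists_eq_append_getLast hv
    rw [bumpLast_append, bumpLast_append] at h
    obtain ⟨h1, h2⟩ := List.append_inj' h rfl
    simp at h2
    rw [h1, h2]

/-- `u ∈ K_i, v ∈ K_j ⟹ u ∨ v ∈ K_{i+j}`, and every `w ∈ K_i` with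
`i ≥ 2` factors uniquely as `w = u ∨ v` with `u ∈ K_j`, `v ∈ K_{i−j}`, `1 ≤ j < i`
(the lengths `j = |u|` and `i − j = |v|` being determined by the pair `(u, v)`). -/
theorem kwords_free_magma :
    (∀ u v : List ℕ, IsKList u → IsKList v → IsKList (u ++ bumpLast v)) ∧
    (∀ w : List ℕ, IsKList w → 2 ≤ w.length →
      ∃! p : List ℕ × List ℕ,
        IsKList p.1 ∧ IsKList p.2 ∧ w = p.1 ++ bumpLast p.2) := by
  constructor
  · rintro u v ⟨hu1, hu2, hu3⟩ ⟨hv1, hv2, hv3⟩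
    have hvne : v ≠ [] := List.ne_nil_of_length_pos (by omega)
    refine ⟨?_, ?_, ?_⟩
    · simp only [List.length_append, bumpLast_length]; omega
    · intro k hk1 hk2
      simp only [List.length_append, bumpLast_length] at hk2
      rw [List.take_append, List.sum_append]
      rcases lt_or_ge k u.length with h | h
      · have h1 := hu2 k hk1 h
        have h0 : k - u.length = 0 := by omega
        rw [h0]
        simpa using h1
      · rw [List.take_of_length_le h]
        set m := k - u.length with hm
        have hmlt : m < v.length := by omega
        rcases Nat.eq_zero_or_pos m with h0 | h0
        · rw [h0]; simp; omega
        · rw [bumpLast_take hmlt]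
          have := hv2 m h0 hmlt
          omega
    · rw [List.sum_append, List.length_append, bumpLast_sum hvne, bumpLast_length]
      omega
  · rintro w ⟨hw1, hw2, hw3⟩ hlen
    classical
    obtain ⟨n, hn⟩ : ∃ n, n = w.length := ⟨_, rfl⟩
    rw [← hn] at hw1 hw2 hw3 hlen
    set P : ℕ → Prop := fun k => 1 ≤ k ∧ (w.take k).sum + 1 = k with hP
    have hP1 : P 1 := by
      refine ⟨le_refl 1, ?_⟩
      have := hw2 1 (le_refl 1) (by omega)
      omega
    obtain ⟨j, hj⟩ : ∃ j, j = Nat.findGreatest P (n - 1) := ⟨_, rfl⟩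
    have hj1 : 1 ≤ j := hj ▸ Nat.le_findGreatest (by omega) hP1
    have hjn : j ≤ n - 1 := hj ▸ Nat.findGreatest_le _
    have hPj2 : (w.take j).sum + 1 = j :=
      (hj ▸ Nat.findGreatest_spec (m := 1) (by omega) hP1 : P j).2
    have hmax : ∀ k, j < k → k < n → (w.take k).sum + 2 ≤ k := by
      intro k hk1 hk2
      have hnP : ¬ P k := Nat.findGreatest_is_greatest (hj ▸ hk1) (by omega)
      have hle := hw2 k (by omega) hk2
      simp only [hP, not_and_or] at hnP
      rcases hnP with h | h
      · omega
      · omega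
    have hsumdec : (w.take j).sum + (w.drop j).sum = w.sum := by
      rw [← List.sum_append, List.take_append_drop]
    have hdlen : (w.drop j).length = n - j := by rw [List.length_drop, ← hn]
    have hdne : (w.drop j) ≠ [] := List.ne_nil_of_length_pos (by omega)
    have hdsum : (w.drop j).sum = n - j := by omega
    have hdtake : ∀ m, 1 ≤ m → m < n - j → ((w.drop j).take m).sum + 1 ≤ m := by
      intro m hm1 hm2
      have hkey : (w.take (j + m)).sum + 2 ≤ j + m := hmax (j + m) (by omega) (by omega)
      rw [List.take_add, List.sum_append] at hkey
      omega
    obtain ⟨t, a, hta⟩ := exists_eq_append_getLast hdne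
    have htlen : t.length = n - j - 1 := by
      have : (w.drop j).length = t.length + 1 := by rw [hta]; simp
      omega
    have htsum : t.sum + a = n - j := by
      have : (w.drop j).sum = t.sum + a := by rw [hta]; simp
      omega
    have hdtake_t : ∀ m, m ≤ t.length → (w.drop j).take m = t.take m := by
      intro m hm
      rw [hta, List.take_append_of_le_length hm]
    have ha : 1 ≤ a := by
      rcases Nat.eq_zero_or_pos t.length with h0 | h0
      · rw [List.length_eq_zero_iff.mp h0] at htsum
        simp at htsum
        omega
      · have h1 := hdtake t.length h0 (by omega)
        rw [hdtake_t t.length le_rfl, List.take_length] at h1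
        omega
    obtain ⟨v₀, hv₀⟩ : ∃ v₀ : List ℕ, v₀ = t ++ [a - 1] := ⟨_, rfl⟩
    have hbump : bumpLast v₀ = w.drop j := by
      rw [hv₀, bumpLast_append, hta]
      congr 2
      omega
    obtain ⟨u₀, hu₀⟩ : ∃ u₀ : List ℕ, u₀ = w.take j := ⟨_, rfl⟩
    have hu₀len : u₀.length = j := by
      rw [hu₀, List.length_take, ← hn]; omega
    have hu₀K : IsKList u₀ := by
      refine ⟨by omega, ?_, ?_⟩
      · intro k hk1 hk2
        rw [hu₀len] at hk2
        rw [hu₀, List.take_take, min_eq_left (by omega)]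
        exact hw2 k hk1 (by omega)
      · rw [hu₀len, hu₀]
        omega
    have hv₀len : v₀.length = n - j := by
      rw [hv₀]; simp; omega
    have hv₀sum : v₀.sum = n - j - 1 := by
      rw [hv₀, List.sum_append]
      simp
      omega
    have hv₀K : IsKList v₀ := by
      refine ⟨by omega, ?_, ?_⟩
      · intro k hk1 hk2
        rw [hv₀len] at hk2
        rw [hv₀, List.take_append_of_le_length (by omega), ← hdtake_t k (by omega)]
        have := hdtake k hk1 (by omega)
        omega
      · rw [hv₀len, hv₀sum]
    have hw_eq : w = u₀ ++ bumpLast v₀ := by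
      rw [hbump, hu₀, List.take_append_drop]
    refine ⟨(u₀, v₀), ⟨hu₀K, hv₀K, hw_eq⟩, ?_⟩
    rintro ⟨u, v⟩ ⟨⟨hu1, hu2, hu3⟩, ⟨hv1, hv2, hv3⟩, heq⟩
    dsimp only at heq hu1 hu2 hu3 hv1 hv2 hv3
    have hvne : v ≠ [] := List.ne_nil_of_length_pos (by omega)
    have hnlen : n = u.length + v.length := by
      rw [hn, heq, List.length_append, bumpLast_length]
    have hPj' : P u.length := by
      refine ⟨by omega, ?_⟩
      rw [heq, List.take_append_of_le_length le_rfl, List.take_length]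
      omega
    have hj'le : u.length ≤ j := hj ▸ Nat.le_findGreatest (by omega) hPj'
    have hjj' : u.length = j := by
      by_contra hnej
      have hlt : u.length < j := by omega
      have hcon : (w.take j).sum + 2 ≤ j := by
        have hmlt : j - u.length < v.length := by omega
        rw [heq, List.take_append, List.take_of_length_le (by omega),
          List.sum_append, bumpLast_take hmlt]
        have := hv2 (j - u.length) (by omega) hmlt
        omega
      omega
    have hu_eq : u = u₀ := by
      rw [hu₀, heq, ← hjj']
      exact List.take_left.symm
    have hv_eq : v = v₀ := by
      apply bumpLast_inj
      rw [hbump, heq, ← hjj']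
      exact List.drop_left.symm
    rw [hu_eq, hv_eq]
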